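/- Common factor in the multi-dimensional pass-through (Proposition 9). Assume θ(q*(T₀)) ≠ 0 and mc(q*(T₀)) ≠ 0. Then for every index ℓ ∈ {1, …, d}, the pass-through rate satisfies ρ̃_{T_ℓ}·D_M = p·(τ_{T_ℓ} − ν_{T_ℓ}·η·θ), where D_M = 1 − κ + ε·τ₍₂₎ + (1−τ)·ε·χ + [ν − κ + η·ν₍₂₎ + (ω − η − χ)·(1−ν)]·θ and ω = q·(η·θ)'(q)/(η(q)·θ(q)), with (η·θ)' the derivative with respect to q of the function q ↦ η(q)·θ(q). All quantities are evaluated at the equilibrium point (p(q*(T₀)), q*(T₀), T₀). In particular ρ̃_{T_ℓ} = (τ_{T_ℓ} − ν_{T_ℓ}·η·θ)·p·ρ₍₀₎ with the common factor ρ₍₀₎ = 1/D_M independent of ℓ. -/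

import Mathlib

set_option maxHeartbeats 1000000 in
/-- **Proposition 9 (Common factor in the multi-dimensional pass-through).** -/
theorem common_factor_in_pass_through
    -- inverse industry demand, twice differentiable, positive and decreasing on q > 0
    (d : ℕ)
    (p p' p'' : ℝ → ℝ)
    (hp : ∀ q : ℝ, HasDerivAt p (p' q) q)
    (hp' : ∀ q : ℝ, HasDerivAt p' (p'' q) q)
    (hppos : ∀ q : ℝ, 0 < q → 0 < p q)
    (hpneg : ∀ q : ℝ, 0 < q → p' q < 0)
    -- cost function, twice differentiable, marginal cost mc = c'
    (c mc mc' : ℝ → ℝ)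
    (hc : ∀ q : ℝ, HasDerivAt c (mc q) q)
    (hmc : ∀ q : ℝ, HasDerivAt mc (mc' q) q)
    -- conduct index
    (θ : ℝ → ℝ) (hθ : Differentiable ℝ θ)
    -- tax function φ(p, q, T), twice continuously differentiable
    (φ : ℝ → ℝ → (Fin d → ℝ) → ℝ)
    (hφ : ContDiff ℝ 2 (fun x : ℝ × ℝ × (Fin d → ℝ) => φ x.1 x.2.1 x.2.2))
    -- first-order price and quantity sensitivities of the tax revenue
    (ν τf : ℝ → ℝ → (Fin d → ℝ) → ℝ)
    (hν : ∀ (a b : ℝ) (T : Fin d → ℝ), ν a b T = (1 / b) * deriv (fun x => φ x b T) a)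
    (hτf : ∀ (a b : ℝ) (T : Fin d → ℝ), τf a b T = (1 / a) * deriv (fun x => φ a x T) b)
    -- symmetric equilibrium on an open neighborhood of T₀
    (T₀ : Fin d → ℝ) (qs : (Fin d → ℝ) → ℝ)
    (U : Set (Fin d → ℝ)) (hU : IsOpen U) (hT₀ : T₀ ∈ U)
    (hqs : ContDiffOn ℝ 1 qs U)
    (hqpos : ∀ T ∈ U, 0 < qs T)
    (hFOC : ∀ T ∈ U,
      (1 - τf (p (qs T)) (qs T) T
          - (1 - ν (p (qs T)) (qs T) T) * (-(qs T) * p' (qs T) / p (qs T)) * θ (qs T))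
        * p (qs T) = mc (qs T))
    -- equilibrium values
    (q0 p0 η0 ε0 θ0 ν0 τ0 : ℝ)
    (hq0 : q0 = qs T₀) (hp0 : p0 = p q0)
    (hη0 : η0 = -q0 * p' q0 / p q0) (hε0 : ε0 = 1 / η0)
    (hθ0 : θ0 = θ q0) (hν0 : ν0 = ν p0 q0 T₀) (hτ0 : τ0 = τf p0 q0 T₀)
    -- pass-through rate vector and tax-instrument derivatives of φ, τ, ν
    (ρvec fvec τvec νvec : Fin d → ℝ)
    (hρvec : ∀ ℓ : Fin d,
      ρvec ℓ = deriv (fun s => p (qs (Function.update T₀ ℓ s))) (T₀ ℓ))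
    (hfvec : ∀ ℓ : Fin d,
      fvec ℓ = (1 / q0) * deriv (fun s => φ p0 q0 (Function.update T₀ ℓ s)) (T₀ ℓ))
    (hτvec : ∀ ℓ : Fin d,
      τvec ℓ = deriv (fun s => τf p0 q0 (Function.update T₀ ℓ s)) (T₀ ℓ))
    (hνvec : ∀ ℓ : Fin d,
      νvec ℓ = deriv (fun s => ν p0 q0 (Function.update T₀ ℓ s)) (T₀ ℓ))
    -- nondegeneracy at the equilibrium
    (hθne : θ q0 ≠ 0) (hmcne : mc q0 ≠ 0)
    -- marginal-cost elasticity
    (χ0 : ℝ) (hχ0 : χ0 = q0 * mc' q0 / mc q0)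
    -- second-order sensitivities of the tax revenue
    (ν2 τ2 κ0 : ℝ)
    (hν2 : ν2 = (p0 / q0) * deriv (deriv (fun x => φ x q0 T₀)) p0)
    (hτ2 : τ2 = (q0 / p0) * deriv (deriv (fun x => φ p0 x T₀)) q0)
    (hκ0 : κ0 = deriv (fun x => deriv (fun y => φ x y T₀) q0) p0)
    -- ω = q·(η·θ)'(q)/(η(q)·θ(q))
    (ω0 : ℝ)
    (hω0 : ω0 = q0 * deriv (fun x => (-x * p' x / p x) * θ x) q0 / (η0 * θ0))
    -- the common denominator D_M
    (DM : ℝ)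
    (hDM : DM = 1 - κ0 + ε0 * τ2 + (1 - τ0) * ε0 * χ0
        + (ν0 - κ0 + η0 * ν2 + (ω0 - η0 - χ0) * (1 - ν0)) * θ0) :
    (∀ ℓ : Fin d, ρvec ℓ * DM = p0 * (τvec ℓ - νvec ℓ * η0 * θ0))
    ∧ (DM ≠ 0 → ∀ ℓ : Fin d,
        ρvec ℓ = (τvec ℓ - νvec ℓ * η0 * θ0) * p0 * (1 / DM)) := by
  -- basic positivity and nonvanishing
  have hq0pos : 0 < q0 := by rw [hq0]; exact hqpos T₀ hT₀
  have hq0ne : q0 ≠ 0 := ne_of_gt hq0pos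
  have hpq0pos : 0 < p q0 := hppos q0 hq0pos
  have hpne : p q0 ≠ 0 := ne_of_gt hpq0pos
  have hp0pos : 0 < p0 := by rw [hp0]; exact hpq0pos
  have hp0ne : p0 ≠ 0 := ne_of_gt hp0pos
  have hη0pos : 0 < η0 := by
    rw [hη0]
    exact div_pos (mul_pos_of_neg_of_neg (by linarith) (hpneg q0 hq0pos)) hpq0pos
  have hη0ne : η0 ≠ 0 := ne_of_gt hη0pos
  have hθ0ne : θ0 ≠ 0 := by rw [hθ0]; exact hθne
  -- differentiability of Φ
  have hΦdiff : Differentiable ℝ (fun x : ℝ × ℝ × (Fin d → ℝ) => φ x.1 x.2.1 x.2.2) :=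
    hφ.differentiable (by norm_num)
  have hBdiff : Differentiable ℝ (fderiv ℝ (fun x : ℝ × ℝ × (Fin d → ℝ) => φ x.1 x.2.1 x.2.2)) :=
    (hφ.fderiv_right (m := 1) (by norm_num)).differentiable (by norm_num)
  -- partial derivative lemmas
  have key1 : ∀ (a b : ℝ) (T : Fin d → ℝ), HasDerivAt (fun x => φ x b T)
      (fderiv ℝ (fun x : ℝ × ℝ × (Fin d → ℝ) => φ x.1 x.2.1 x.2.2) (a, b, T)
        ((1:ℝ), (0:ℝ), (0:Fin d → ℝ))) a := fun a b T =>
    ((hΦdiff _).hasFDerivAt).comp_hasDerivAt a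
      (HasDerivAt.prodMk (hasDerivAt_id a) (HasDerivAt.prodMk (hasDerivAt_const a b) (hasDerivAt_const a T)))
  have key2 : ∀ (a b : ℝ) (T : Fin d → ℝ), HasDerivAt (fun y => φ a y T)
      (fderiv ℝ (fun x : ℝ × ℝ × (Fin d → ℝ) => φ x.1 x.2.1 x.2.2) (a, b, T)
        ((0:ℝ), (1:ℝ), (0:Fin d → ℝ))) b := fun a b T =>
    ((hΦdiff _).hasFDerivAt).comp_hasDerivAt b
      (HasDerivAt.prodMk (hasDerivAt_const b a) (HasDerivAt.prodMk (hasDerivAt_id b) (hasDerivAt_const b T)))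
  have hBv : ∀ (v : ℝ × ℝ × (Fin d → ℝ)) (γ : ℝ → ℝ × ℝ × (Fin d → ℝ))
      (γ' : ℝ × ℝ × (Fin d → ℝ)) (t : ℝ), γ t = (p0, q0, T₀) → HasDerivAt γ γ' t →
      HasDerivAt (fun s => fderiv ℝ (fun x : ℝ × ℝ × (Fin d → ℝ) => φ x.1 x.2.1 x.2.2) (γ s) v)
        (fderiv ℝ (fderiv ℝ (fun x : ℝ × ℝ × (Fin d → ℝ) => φ x.1 x.2.1 x.2.2))
          (p0, q0, T₀) γ' v) t := by
    intro v γ γ' t hγt hγ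
    have hB : HasFDerivAt (fderiv ℝ (fun x : ℝ × ℝ × (Fin d → ℝ) => φ x.1 x.2.1 x.2.2))
        (fderiv ℝ (fderiv ℝ (fun x : ℝ × ℝ × (Fin d → ℝ) => φ x.1 x.2.1 x.2.2)) (p0, q0, T₀))
        (γ t) := by
      rw [hγt]; exact (hBdiff _).hasFDerivAt
    exact ((ContinuousLinearMap.apply ℝ ℝ v).hasFDerivAt.comp (γ t) hB).comp_hasDerivAt t hγ
  have hSymm : fderiv ℝ (fderiv ℝ (fun x : ℝ × ℝ × (Fin d → ℝ) => φ x.1 x.2.1 x.2.2))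
        (p0, q0, T₀) ((0:ℝ), (1:ℝ), (0:Fin d → ℝ)) ((1:ℝ), (0:ℝ), (0:Fin d → ℝ))
      = fderiv ℝ (fderiv ℝ (fun x : ℝ × ℝ × (Fin d → ℝ) => φ x.1 x.2.1 x.2.2))
        (p0, q0, T₀) ((1:ℝ), (0:ℝ), (0:Fin d → ℝ)) ((0:ℝ), (1:ℝ), (0:Fin d → ℝ)) :=
    (hφ.contDiffAt.isSymmSndFDerivAt (by norm_num)).eq _ _
  -- curves through the equilibrium point in the p and q directions
  have hγ1 : HasDerivAt (fun x : ℝ => ((x, q0, T₀) : ℝ × ℝ × (Fin d → ℝ)))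
      ((1:ℝ), (0:ℝ), (0:Fin d → ℝ)) p0 :=
    HasDerivAt.prodMk (hasDerivAt_id p0) (HasDerivAt.prodMk (hasDerivAt_const p0 q0) (hasDerivAt_const p0 T₀))
  have hγ2 : HasDerivAt (fun y : ℝ => ((p0, y, T₀) : ℝ × ℝ × (Fin d → ℝ)))
      ((0:ℝ), (1:ℝ), (0:Fin d → ℝ)) q0 :=
    HasDerivAt.prodMk (hasDerivAt_const q0 p0) (HasDerivAt.prodMk (hasDerivAt_id q0) (hasDerivAt_const q0 T₀))
  -- scalar relations at the equilibrium point
  have hν0' : ν0 = (1 / q0) * fderiv ℝ (fun x : ℝ × ℝ × (Fin d → ℝ) => φ x.1 x.2.1 x.2.2)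
      (p0, q0, T₀) ((1:ℝ), (0:ℝ), (0:Fin d → ℝ)) := by
    rw [hν0, hν, (key1 p0 q0 T₀).deriv]
  have hτ0' : τ0 = (1 / p0) * fderiv ℝ (fun x : ℝ × ℝ × (Fin d → ℝ) => φ x.1 x.2.1 x.2.2)
      (p0, q0, T₀) ((0:ℝ), (1:ℝ), (0:Fin d → ℝ)) := by
    rw [hτ0, hτf, (key2 p0 q0 T₀).deriv]
  have hκ' : κ0 = fderiv ℝ (fderiv ℝ (fun x : ℝ × ℝ × (Fin d → ℝ) => φ x.1 x.2.1 x.2.2))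
      (p0, q0, T₀) ((1:ℝ), (0:ℝ), (0:Fin d → ℝ)) ((0:ℝ), (1:ℝ), (0:Fin d → ℝ)) := by
    rw [hκ0]
    have h1 : (fun x => deriv (fun y => φ x y T₀) q0)
        = fun x => fderiv ℝ (fun x : ℝ × ℝ × (Fin d → ℝ) => φ x.1 x.2.1 x.2.2) (x, q0, T₀)
            ((0:ℝ), (1:ℝ), (0:Fin d → ℝ)) := funext fun x => (key2 x q0 T₀).deriv
    rw [h1]
    exact (hBv _ _ _ _ rfl hγ1).deriv
  have hν2' : ν2 = (p0 / q0) * fderiv ℝ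
      (fderiv ℝ (fun x : ℝ × ℝ × (Fin d → ℝ) => φ x.1 x.2.1 x.2.2))
      (p0, q0, T₀) ((1:ℝ), (0:ℝ), (0:Fin d → ℝ)) ((1:ℝ), (0:ℝ), (0:Fin d → ℝ)) := by
    rw [hν2]
    have h1 : deriv (fun x => φ x q0 T₀)
        = fun x => fderiv ℝ (fun x : ℝ × ℝ × (Fin d → ℝ) => φ x.1 x.2.1 x.2.2) (x, q0, T₀)
            ((1:ℝ), (0:ℝ), (0:Fin d → ℝ)) := funext fun x => (key1 x q0 T₀).deriv
    rw [h1]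
    rw [(hBv _ _ _ _ rfl hγ1).deriv]
  have hτ2' : τ2 = (q0 / p0) * fderiv ℝ
      (fderiv ℝ (fun x : ℝ × ℝ × (Fin d → ℝ) => φ x.1 x.2.1 x.2.2))
      (p0, q0, T₀) ((0:ℝ), (1:ℝ), (0:Fin d → ℝ)) ((0:ℝ), (1:ℝ), (0:Fin d → ℝ)) := by
    rw [hτ2]
    have h1 : deriv (fun x => φ p0 x T₀)
        = fun y => fderiv ℝ (fun x : ℝ × ℝ × (Fin d → ℝ) => φ x.1 x.2.1 x.2.2) (p0, y, T₀)
            ((0:ℝ), (1:ℝ), (0:Fin d → ℝ)) := funext fun y => (key2 p0 y T₀).deriv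
    rw [h1]
    rw [(hBv _ _ _ _ rfl hγ2).deriv]
  -- first order condition at T₀
  have hmc0 : (1 - τ0 - (1 - ν0) * η0 * θ0) * p0 = mc q0 := by
    have h := hFOC T₀ hT₀
    rw [← hq0, ← hη0, ← hθ0, ← hp0, ← hν0, ← hτ0] at h
    exact h
  -- marginal cost derivative
  have hmc'0 : mc' q0 = χ0 * ((1 - τ0 - (1 - ν0) * η0 * θ0) * p0) / q0 := by
    rw [hmc0, hχ0]; field_simp
  -- inverse demand derivative
  have hp'0 : p' q0 = -(η0 * p0) / q0 := by
    rw [hη0, hp0]; field_simp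
  -- derivative of the lambda in ω
  have heed : DifferentiableAt ℝ (fun x : ℝ => -x * p' x / p x * θ x) q0 :=
    (((differentiableAt_fun_id.fun_neg.mul (hp' q0).differentiableAt).div
      (hp q0).differentiableAt hpne).mul (hθ q0))
  have heDform : deriv (fun x : ℝ => -x * p' x / p x * θ x) q0 = ω0 * (η0 * θ0) / q0 := by
    rw [hω0]; field_simp
  -- main statement
  have main : ∀ ℓ : Fin d, ρvec ℓ * DM = p0 * (τvec ℓ - νvec ℓ * η0 * θ0) := by
    intro ℓ
    -- derivative of the update curve
    have hupd : ∀ t : ℝ, HasDerivAt (fun s => Function.update T₀ ℓ s) (Pi.single ℓ (1:ℝ)) t := by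
      intro t
      rw [hasDerivAt_pi]
      intro i
      simp only [Function.update_apply, Pi.single_apply]
      by_cases h : i = ℓ
      · simp only [h, if_pos rfl]
        exact hasDerivAt_id t
      · simp only [if_neg h]
        exact hasDerivAt_const t (T₀ i)
    have hgs0 : qs (Function.update T₀ ℓ (T₀ ℓ)) = q0 := by
      rw [Function.update_eq_self]; exact hq0.symm
    have hqsd : DifferentiableAt ℝ qs T₀ :=
      (hqs.contDiffAt (hU.mem_nhds hT₀)).differentiableAt one_ne_zero
    have hg : HasDerivAt (fun s => qs (Function.update T₀ ℓ s))
        (fderiv ℝ qs T₀ (Pi.single ℓ (1:ℝ))) (T₀ ℓ) :=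
      hqsd.hasFDerivAt.comp_hasDerivAt_of_eq (T₀ ℓ) (hupd (T₀ ℓ)) (Function.update_eq_self ℓ T₀).symm
    have hpcur : HasDerivAt (fun s => p (qs (Function.update T₀ ℓ s)))
        (p' q0 * fderiv ℝ qs T₀ (Pi.single ℓ (1:ℝ))) (T₀ ℓ) := by
      have h1 : HasDerivAt p (p' q0) (qs (Function.update T₀ ℓ (T₀ ℓ))) := by
        rw [hgs0]; exact hp q0
      exact h1.comp (T₀ ℓ) hg
    have hρ : ρvec ℓ = p' q0 * fderiv ℝ qs T₀ (Pi.single ℓ (1:ℝ)) := by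
      rw [hρvec ℓ]; exact hpcur.deriv
    -- curve in the tax direction
    have hγT : HasDerivAt (fun s : ℝ => ((p0, q0, Function.update T₀ ℓ s) : ℝ × ℝ × (Fin d → ℝ)))
        ((0:ℝ), (0:ℝ), Pi.single ℓ (1:ℝ)) (T₀ ℓ) :=
      HasDerivAt.prodMk (hasDerivAt_const (T₀ ℓ) p0) (HasDerivAt.prodMk (hasDerivAt_const (T₀ ℓ) q0) (hupd (T₀ ℓ)))
    have hγT0 : ((p0, q0, Function.update T₀ ℓ (T₀ ℓ)) : ℝ × ℝ × (Fin d → ℝ)) = (p0, q0, T₀) := by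
      rw [Function.update_eq_self]
    have hτv : τvec ℓ = (1 / p0) * fderiv ℝ
        (fderiv ℝ (fun x : ℝ × ℝ × (Fin d → ℝ) => φ x.1 x.2.1 x.2.2))
        (p0, q0, T₀) ((0:ℝ), (0:ℝ), Pi.single ℓ (1:ℝ)) ((0:ℝ), (1:ℝ), (0:Fin d → ℝ)) := by
      rw [hτvec ℓ]
      have h1 : (fun s => τf p0 q0 (Function.update T₀ ℓ s))
          = fun s => (1 / p0) * fderiv ℝ (fun x : ℝ × ℝ × (Fin d → ℝ) => φ x.1 x.2.1 x.2.2)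
              (p0, q0, Function.update T₀ ℓ s) ((0:ℝ), (1:ℝ), (0:Fin d → ℝ)) :=
        funext fun s => by rw [hτf, (key2 p0 q0 _).deriv]
      rw [h1]
      exact ((hBv _ _ _ _ hγT0 hγT).const_mul (1 / p0)).deriv
    have hνv : νvec ℓ = (1 / q0) * fderiv ℝ
        (fderiv ℝ (fun x : ℝ × ℝ × (Fin d → ℝ) => φ x.1 x.2.1 x.2.2))
        (p0, q0, T₀) ((0:ℝ), (0:ℝ), Pi.single ℓ (1:ℝ)) ((1:ℝ), (0:ℝ), (0:Fin d → ℝ)) := by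
      rw [hνvec ℓ]
      have h1 : (fun s => ν p0 q0 (Function.update T₀ ℓ s))
          = fun s => (1 / q0) * fderiv ℝ (fun x : ℝ × ℝ × (Fin d → ℝ) => φ x.1 x.2.1 x.2.2)
              (p0, q0, Function.update T₀ ℓ s) ((1:ℝ), (0:ℝ), (0:Fin d → ℝ)) :=
        funext fun s => by rw [hν, (key1 p0 q0 _).deriv]
      rw [h1]
      exact ((hBv _ _ _ _ hγT0 hγT).const_mul (1 / q0)).deriv
    -- the big equilibrium curve
    have hΓ : HasDerivAt (fun s : ℝ =>
        ((p (qs (Function.update T₀ ℓ s)), qs (Function.update T₀ ℓ s), Function.update T₀ ℓ s)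
          : ℝ × ℝ × (Fin d → ℝ)))
        ((p' q0 * fderiv ℝ qs T₀ (Pi.single ℓ (1:ℝ)), fderiv ℝ qs T₀ (Pi.single ℓ (1:ℝ)),
          Pi.single ℓ (1:ℝ)) : ℝ × ℝ × (Fin d → ℝ)) (T₀ ℓ) :=
      hpcur.prodMk (hg.prodMk (hupd (T₀ ℓ)))
    have hΓ0 : ((p (qs (Function.update T₀ ℓ (T₀ ℓ))), qs (Function.update T₀ ℓ (T₀ ℓ)),
        Function.update T₀ ℓ (T₀ ℓ)) : ℝ × ℝ × (Fin d → ℝ)) = (p0, q0, T₀) := by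
      rw [Function.update_eq_self, ← hq0, ← hp0]
    -- decomposition of the direction vector
    have hdec : ∀ w : ℝ × ℝ × (Fin d → ℝ),
        fderiv ℝ (fderiv ℝ (fun x : ℝ × ℝ × (Fin d → ℝ) => φ x.1 x.2.1 x.2.2)) (p0, q0, T₀)
          ((p' q0 * fderiv ℝ qs T₀ (Pi.single ℓ (1:ℝ)), fderiv ℝ qs T₀ (Pi.single ℓ (1:ℝ)),
            Pi.single ℓ (1:ℝ)) : ℝ × ℝ × (Fin d → ℝ)) w
        = (p' q0 * fderiv ℝ qs T₀ (Pi.single ℓ (1:ℝ)))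
            * fderiv ℝ (fderiv ℝ (fun x : ℝ × ℝ × (Fin d → ℝ) => φ x.1 x.2.1 x.2.2)) (p0, q0, T₀)
              ((1:ℝ), (0:ℝ), (0:Fin d → ℝ)) w
          + fderiv ℝ qs T₀ (Pi.single ℓ (1:ℝ))
            * fderiv ℝ (fderiv ℝ (fun x : ℝ × ℝ × (Fin d → ℝ) => φ x.1 x.2.1 x.2.2)) (p0, q0, T₀)
              ((0:ℝ), (1:ℝ), (0:Fin d → ℝ)) w
          + fderiv ℝ (fderiv ℝ (fun x : ℝ × ℝ × (Fin d → ℝ) => φ x.1 x.2.1 x.2.2)) (p0, q0, T₀)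
              ((0:ℝ), (0:ℝ), Pi.single ℓ (1:ℝ)) w := by
      intro w
      have hv : ((p' q0 * fderiv ℝ qs T₀ (Pi.single ℓ (1:ℝ)), fderiv ℝ qs T₀ (Pi.single ℓ (1:ℝ)),
          Pi.single ℓ (1:ℝ)) : ℝ × ℝ × (Fin d → ℝ))
          = (p' q0 * fderiv ℝ qs T₀ (Pi.single ℓ (1:ℝ))) • ((1:ℝ), (0:ℝ), (0:Fin d → ℝ))
            + (fderiv ℝ qs T₀ (Pi.single ℓ (1:ℝ))) • ((0:ℝ), (1:ℝ), (0:Fin d → ℝ))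
            + ((0:ℝ), (0:ℝ), Pi.single ℓ (1:ℝ)) := by
        simp [Prod.ext_iff]
      rw [hv, map_add, map_add, map_smul, map_smul]
      simp
    -- eventually the FOC holds along the curve
    have hUev : ∀ᶠ s in nhds (T₀ ℓ), Function.update T₀ ℓ s ∈ U :=
      (hupd (T₀ ℓ)).continuousAt.preimage_mem_nhds
        (by rw [Function.update_eq_self]; exact hU.mem_nhds hT₀)
    have hPinv : HasDerivAt (fun s => (p (qs (Function.update T₀ ℓ s)))⁻¹)
        (-(p' q0 * fderiv ℝ qs T₀ (Pi.single ℓ (1:ℝ))) / p0 ^ 2) (T₀ ℓ) := by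
      have h := hpcur.inv (by rw [hgs0]; exact hpne)
      rw [hgs0, ← hp0] at h
      exact h
    have hQinv : HasDerivAt (fun s => (qs (Function.update T₀ ℓ s))⁻¹)
        (-(fderiv ℝ qs T₀ (Pi.single ℓ (1:ℝ))) / q0 ^ 2) (T₀ ℓ) := by
      have h := hg.inv (by rw [hgs0]; exact hq0ne)
      rw [hgs0] at h
      exact h
    have hB1 := hBv ((1:ℝ), (0:ℝ), (0:Fin d → ℝ)) _ _ _ hΓ0 hΓ
    have hB2 := hBv ((0:ℝ), (1:ℝ), (0:Fin d → ℝ)) _ _ _ hΓ0 hΓ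
    have hecur0 : HasDerivAt (fun x : ℝ => -x * p' x / p x * θ x)
        (deriv (fun x : ℝ => -x * p' x / p x * θ x) q0) (qs (Function.update T₀ ℓ (T₀ ℓ))) := by
      rw [hgs0]; exact heed.hasDerivAt
    have hecur := hecur0.comp (T₀ ℓ) hg
    have hmccur0 : HasDerivAt mc (mc' q0) (qs (Function.update T₀ ℓ (T₀ ℓ))) := by
      rw [hgs0]; exact hmc q0
    have hmccur := hmccur0.comp (T₀ ℓ) hg
    have hτc := hPinv.mul hB2
    have hνc := hQinv.mul hB1
    have hG3 := ((((hasDerivAt_const (T₀ ℓ) (1:ℝ)).sub hτc).sub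
      (((hasDerivAt_const (T₀ ℓ) (1:ℝ)).sub hνc).mul hecur)).mul hpcur).sub hmccur
    have hEq : (fun s => (1 - (p (qs (Function.update T₀ ℓ s)))⁻¹ *
          fderiv ℝ (fun x : ℝ × ℝ × (Fin d → ℝ) => φ x.1 x.2.1 x.2.2)
            (p (qs (Function.update T₀ ℓ s)), qs (Function.update T₀ ℓ s), Function.update T₀ ℓ s)
            ((0:ℝ), (1:ℝ), (0:Fin d → ℝ))
        - (1 - (qs (Function.update T₀ ℓ s))⁻¹ *
          fderiv ℝ (fun x : ℝ × ℝ × (Fin d → ℝ) => φ x.1 x.2.1 x.2.2)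
            (p (qs (Function.update T₀ ℓ s)), qs (Function.update T₀ ℓ s), Function.update T₀ ℓ s)
            ((1:ℝ), (0:ℝ), (0:Fin d → ℝ))) *
          (-(qs (Function.update T₀ ℓ s)) * p' (qs (Function.update T₀ ℓ s)) /
            p (qs (Function.update T₀ ℓ s)) * θ (qs (Function.update T₀ ℓ s))))
        * p (qs (Function.update T₀ ℓ s)) - mc (qs (Function.update T₀ ℓ s)))
        =ᶠ[nhds (T₀ ℓ)] fun _ => (0 : ℝ) := by
      filter_upwards [hUev] with s hs
      have h := hFOC _ hs
      rw [hτf, hν, (key2 _ _ _).deriv, (key1 _ _ _).deriv] at h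
      linear_combination h
    have h0 := (hasDerivAt_const (T₀ ℓ) (0:ℝ)).congr_of_eventuallyEq hEq
    have hGD0 := hG3.unique h0
    simp only [Function.comp_apply, Pi.sub_apply, Pi.mul_apply, Pi.inv_apply, Function.update_eq_self, hgs0, ← hq0, ← hp0] at hGD0
    have hN1 : fderiv ℝ (fun x : ℝ × ℝ × (Fin d → ℝ) => φ x.1 x.2.1 x.2.2)
        (p0, q0, T₀) ((1:ℝ), (0:ℝ), (0:Fin d → ℝ)) = q0 * ν0 := by
      rw [hν0']; field_simp
    have hN2 : fderiv ℝ (fun x : ℝ × ℝ × (Fin d → ℝ) => φ x.1 x.2.1 x.2.2)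
        (p0, q0, T₀) ((0:ℝ), (1:ℝ), (0:Fin d → ℝ)) = p0 * τ0 := by
      rw [hτ0']; field_simp
    rw [hdec, hdec, hSymm, hN1, hN2, heDform, hmc'0, hp'0, ← hθ0] at hGD0
    rw [hρ, hDM, hε0, hκ', hν2', hτ2', hτv, hνv, hp'0]
    linear_combination (norm := skip) hGD0
    field_simp
    ring

  refine ⟨main, fun hDMne ℓ => ?_⟩
  have h := main ℓ
  field_simp
  linear_combination h
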